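/- For every integer m ≥ 0 and every real s with |s| < 1, the generating function of the coefficients h_{m,n} satisfies ∑_{n≥0} h_{m,n} · s^n = 1 / (2·√(1−s)·(3 − 3s + s²)^{m+1}). -/

import Mathlib

/-- The coefficient
`h_{m,n} = (1/(2·3^{m+1})) ∑_{j=0}^{⌊n/2⌋} C(m+j,m)·Γ(m+n−j+3/2)/((n−2j)!·Γ(j+m+3/2))·(−1/3)^j`. -/
noncomputable def airyCoeffH (m n : ℕ) : ℝ :=
  (1 / (2 * 3 ^ (m + 1))) *
    ∑ j ∈ Finset.range (n / 2 + 1),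
      (Nat.choose (m + j) m : ℝ) * Real.Gamma ((m : ℝ) + n - j + 3 / 2) /
        ((Nat.factorial (n - 2 * j) : ℝ) * Real.Gamma ((j : ℝ) + m + 3 / 2)) *
        (-1 / 3 : ℝ) ^ j


open Finset Filter
open scoped ENNReal NNReal

noncomputable def airyPoch (a : ℝ) (k : ℕ) : ℝ := ∏ i ∈ Finset.range k, (a + i)

lemma airyPoch_succ (a : ℝ) (k : ℕ) : airyPoch a (k+1) = airyPoch a k * (a + k) :=
  Finset.prod_range_succ _ _

lemma airyPoch_pos {a : ℝ} (ha : 0 < a) (k : ℕ) : 0 < airyPoch a k :=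
  Finset.prod_pos fun i _ => by positivity

lemma airyGamma_poch {a : ℝ} (ha : 0 < a) (k : ℕ) :
    Real.Gamma (a + k) = airyPoch a k * Real.Gamma a := by
  induction k with
  | zero => simp [airyPoch]
  | succ k ih =>
    have h1 : a + (k+1 : ℕ) = (a + k) + 1 := by push_cast; ring
    have h2 : a + (k : ℝ) ≠ 0 := by positivity
    rw [h1, Real.Gamma_add_one h2, ih, airyPoch_succ]
    ring

noncomputable def airyC (a : ℝ) (k : ℕ) : ℝ := airyPoch a k / k.factorial

lemma airyC_pos {a : ℝ} (ha : 0 < a) (k : ℕ) : 0 < airyC a k := by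
  have := airyPoch_pos ha k
  have : (0:ℝ) < k.factorial := by positivity
  unfold airyC; positivity

lemma airyC_succ {a : ℝ} (k : ℕ) : (k+1 : ℝ) * airyC a (k+1) = (a + k) * airyC a k := by
  unfold airyC
  rw [airyPoch_succ, Nat.factorial_succ]
  push_cast
  have h1 : ((k.factorial : ℝ)) ≠ 0 := by positivity
  field_simp

lemma airy_tendsto_ratio (u v : ℝ) :
    Tendsto (fun k : ℕ => (u + k) / (v + k)) atTop (nhds 1) := by
  have h1 : Tendsto (fun k : ℕ => (v + (k:ℝ))) atTop atTop :=
    tendsto_atTop_add_const_left _ _ tendsto_natCast_atTop_atTop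
  have h2 : Tendsto (fun k : ℕ => (u - v) / (v + k) + 1) atTop (nhds 1) := by
    simpa [div_eq_mul_inv] using
      ((h1.inv_tendsto_atTop).const_mul (u - v)).add (tendsto_const_nhds (x := (1:ℝ)))
  refine h2.congr' ?_
  filter_upwards [h1.eventually_gt_atTop 0] with k hk
  field_simp
  ring

lemma airy_ratio_summable {q : ℕ → ℝ} (hq : ∀ k, 0 < q k)
    (hr : Tendsto (fun k => q (k+1) / q k) atTop (nhds 1)) {y : ℝ} (hy : |y| < 1) :
    Summable fun k => q k * y ^ k := by
  rcases eq_or_ne y 0 with rfl | hy0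
  · apply summable_of_ne_finset_zero (s := {0})
    intro k hk
    simp only [Finset.mem_singleton] at hk
    rw [zero_pow hk, mul_zero]
  · apply summable_of_ratio_test_tendsto_lt_one hy
    · filter_upwards with k
      exact mul_ne_zero (ne_of_gt (hq k)) (pow_ne_zero _ hy0)
    · have : Tendsto (fun k => q (k+1) / q k * |y|) atTop (nhds (1 * |y|)) :=
        hr.mul tendsto_const_nhds
      rw [one_mul] at this
      refine this.congr fun k => ?_
      rw [norm_mul, norm_mul, norm_pow, norm_pow]
      have h1 : ‖y‖ ≠ 0 := by simpa using hy0
      have h2 : (0:ℝ) < ‖q k‖ := by simpa [Real.norm_eq_abs, abs_of_pos (hq k)] using hq k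
      simp only [Real.norm_eq_abs] at *
      rw [abs_of_pos (hq k), abs_of_pos (hq (k+1)), pow_succ]
      have h3 : q k ≠ 0 := ne_of_gt (hq k)
      field_simp

lemma airyC_ratio {a : ℝ} (ha : 0 < a) (k : ℕ) :
    airyC a (k+1) / airyC a k = (a + k) / (k+1) := by
  have h := airyC_succ (a := a) (k := k)
  have h1 : airyC a k ≠ 0 := ne_of_gt (airyC_pos ha k)
  have h2 : ((k:ℝ)+1) ≠ 0 := by positivity
  field_simp
  linarith [h]

lemma airy_summable_c {a : ℝ} (ha : 0 < a) {y : ℝ} (hy : |y| < 1) :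
    Summable fun k => airyC a k * y ^ k := by
  apply airy_ratio_summable (airyC_pos ha) _ hy
  have := airy_tendsto_ratio a 1
  refine this.congr fun k => ?_
  rw [airyC_ratio ha]
  norm_num [add_comm]

lemma airy_summable_ac {a : ℝ} (ha : 0 < a) {y : ℝ} (hy : |y| < 1) :
    Summable fun k => (a + k) * airyC a k * y ^ k := by
  apply airy_ratio_summable (fun k => by have := airyC_pos ha k; positivity) _ hy
  have := airy_tendsto_ratio (a+1) 1
  refine this.congr fun k => ?_
  have h1 : airyC a k ≠ 0 := ne_of_gt (airyC_pos ha k)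
  have h2 : a + (k:ℝ) ≠ 0 := by positivity
  have h3 : ((k:ℝ)+1) ≠ 0 := by positivity
  have h := airyC_succ (a := a) (k := k)
  have hc1 : airyC a (k+1) = (a+k) * airyC a k / (k+1) := by
    field_simp at h ⊢; linarith [h]
  rw [hc1]
  push_cast
  field_simp
  ring

lemma airy_hasSum_binomial {a : ℝ} (ha : 0 < a) {x : ℝ} (hx : |x| < 1) :
    HasSum (fun k => airyC a k * x ^ k) ((1 - x) ^ (-a) : ℝ) := by
  set g : ℝ → ℝ := fun y => ∑' k, airyC a k * y ^ k with hg_def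
  -- Step A: derivative of g
  have stepA : ∀ y : ℝ, |y| < 1 →
      HasDerivAt g (∑' k, airyC a k * ((k:ℝ) * y ^ (k-1))) y := by
    intro y hy
    set r : ℝ := (|y| + 1) / 2 with hr_def
    have hr0 : 0 < r := by positivity
    have hyr : |y| < r := by rw [hr_def]; linarith
    have hr1 : r < 1 := by rw [hr_def]; linarith
    have hrabs : |r| < 1 := by rw [abs_of_pos hr0]; exact hr1
    have hu : Summable (fun k => airyC a k * ((k:ℝ) * r ^ (k-1))) := by
      rw [← summable_nat_add_iff 1]
      apply (airy_summable_ac ha hrabs).congr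
      intro k
      have h := airyC_succ (a := a) (k := k)
      simp only [Nat.add_sub_cancel]
      push_cast
      linear_combination (-(r ^ k)) * h
    have hbound : ∀ (k : ℕ) (z : ℝ), z ∈ Metric.ball (0:ℝ) r →
        ‖airyC a k * ((k:ℝ) * z ^ (k-1))‖ ≤ airyC a k * ((k:ℝ) * r ^ (k-1)) := by
      intro k z hz
      have hz' : |z| ≤ r := by
        rw [Metric.mem_ball, Real.dist_eq, sub_zero] at hz
        exact le_of_lt hz
      have hck := airyC_pos ha k
      rw [Real.norm_eq_abs, abs_mul, abs_mul, abs_of_pos hck, Nat.abs_cast, abs_pow]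
      gcongr
    exact hasDerivAt_tsum_of_isPreconnected hu (Metric.isOpen_ball (x := (0:ℝ)) (ε := r))
        ((convex_ball (0:ℝ) r).isPreconnected)
        (fun k z _ => (hasDerivAt_pow k z).const_mul (airyC a k))
        hbound (Metric.mem_ball_self hr0)
        (airy_summable_c ha (by norm_num : |(0:ℝ)| < 1))
        (by rw [Metric.mem_ball, Real.dist_eq, sub_zero]; exact hyr)
  -- derivative equals nicer series
  have hderiv : ∀ y : ℝ, |y| < 1 →
      HasDerivAt g (∑' k, (a + k) * airyC a k * y ^ k) y := by
    intro y hy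
    have h1 := stepA y hy
    have hsum1 : Summable (fun k => airyC a k * ((k:ℝ) * y ^ (k-1))) := by
      rw [← summable_nat_add_iff 1]
      apply (airy_summable_ac ha hy).congr
      intro k
      have h := airyC_succ (a := a) (k := k)
      simp only [Nat.add_sub_cancel]
      push_cast
      linear_combination (-(y ^ k)) * h
    have heq : ∑' k, airyC a k * ((k:ℝ) * y ^ (k-1))
        = ∑' k, (a + k) * airyC a k * y ^ k := by
      rw [hsum1.tsum_eq_zero_add]
      simp only [Nat.cast_zero, zero_mul, mul_zero, zero_add]
      apply tsum_congr
      intro k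
      have h := airyC_succ (a := a) (k := k)
      simp only [Nat.add_sub_cancel]
      push_cast
      linear_combination (y ^ k) * h
    rwa [heq] at h1
  -- Step B: the ODE
  have stepB : ∀ y : ℝ, |y| < 1 →
      (1 - y) * (∑' k, (a + k) * airyC a k * y ^ k) = a * g y := by
    intro y hy
    have hS1 := airy_summable_c ha hy
    have hS2 := airy_summable_ac ha hy
    have hSk : Summable (fun (k:ℕ) => (k:ℝ) * airyC a k * y ^ k) := by
      apply (hS2.sub (hS1.mul_left a)).congr
      intro k; ring
    have hxA : y * (∑' k, (a + k) * airyC a k * y ^ k)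
        = ∑' (k:ℕ), (k:ℝ) * airyC a k * y ^ k := by
      rw [← tsum_mul_left, hSk.tsum_eq_zero_add]
      simp only [Nat.cast_zero, zero_mul, zero_add]
      apply tsum_congr
      intro k
      have h := airyC_succ (a := a) (k := k)
      push_cast
      linear_combination (-(y ^ (k+1))) * h
    have hsub : (1 - y) * (∑' k, (a + k) * airyC a k * y ^ k)
        = (∑' k, (a + k) * airyC a k * y ^ k) - ∑' (k:ℕ), (k:ℝ) * airyC a k * y ^ k := by
      rw [← hxA]; ring
    rw [hsub, ← hS2.tsum_sub hSk]
    rw [hg_def, ← tsum_mul_left]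
    apply tsum_congr
    intro k; ring
  -- Step C: (1-y)^a * g y has zero derivative
  set h : ℝ → ℝ := fun y => (1 - y) ^ a * g y with hh_def
  have stepC : ∀ y : ℝ, |y| < 1 → HasDerivAt h 0 y := by
    intro y hy
    have h0 : (0:ℝ) < 1 - y := by
      have := abs_lt.mp hy; linarith [this.2]
    have hd1 : HasDerivAt (fun y : ℝ => (1 - y) ^ a) (a * (1-y) ^ (a-1) * (-1)) y := by
      have hbase : HasDerivAt (fun y : ℝ => 1 - y) (-1) y := (hasDerivAt_id y).const_sub 1
      exact (Real.hasDerivAt_rpow_const (Or.inl (ne_of_gt h0))).comp y hbase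
    have hd := hd1.mul (hderiv y hy)
    have hval : a * (1-y) ^ (a-1) * (-1) * g y
        + (1 - y) ^ a * (∑' k, (a + k) * airyC a k * y ^ k) = 0 := by
      have hB := stepB y hy
      have hsplit : (1 - y) ^ a = (1 - y) ^ (a-1) * (1 - y) := by
        rw [← Real.rpow_add_one (ne_of_gt h0) (a-1)]
        norm_num
      rw [hsplit]
      linear_combination (1 - y) ^ (a - 1) * hB
    rwa [hval] at hd
  -- Step D: h is constant, h x = h 0
  have stepD : h x = h 0 := by
    rcases lt_trichotomy x 0 with hneg | rfl | hpos
    · have habs := abs_lt.mp hx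
      have key := constant_of_has_deriv_right_zero (f := h) (a := x) (b := 0)
        (fun y hy => by
          have hy1 : |y| < 1 := by
            rw [Set.mem_Icc] at hy
            rw [abs_lt]; constructor <;> linarith [habs.1, habs.2]
          exact (stepC y hy1).continuousAt.continuousWithinAt)
        (fun y hy => by
          have hy1 : |y| < 1 := by
            rw [Set.mem_Ico] at hy
            rw [abs_lt]; constructor <;> linarith [habs.1, habs.2]
          exact (stepC y hy1).hasDerivWithinAt)
      have := key 0 (Set.mem_Icc.mpr ⟨le_of_lt hneg, le_refl 0⟩)
      exact this.symm
    · rfl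
    · have habs := abs_lt.mp hx
      have key := constant_of_has_deriv_right_zero (f := h) (a := 0) (b := x)
        (fun y hy => by
          have hy1 : |y| < 1 := by
            rw [Set.mem_Icc] at hy
            rw [abs_lt]; constructor <;> linarith [habs.1, habs.2]
          exact (stepC y hy1).continuousAt.continuousWithinAt)
        (fun y hy => by
          have hy1 : |y| < 1 := by
            rw [Set.mem_Ico] at hy
            rw [abs_lt]; constructor <;> linarith [habs.1, habs.2]
          exact (stepC y hy1).hasDerivWithinAt)
      exact key x (Set.mem_Icc.mpr ⟨le_of_lt hpos, le_refl x⟩)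
  -- Step E: conclude
  have hg0 : g 0 = 1 := by
    have h1 : g 0 = ∑' k : ℕ, airyC a k * (0:ℝ) ^ k := rfl
    rw [h1, tsum_eq_single 0 (fun k hk => by simp [zero_pow hk])]
    simp [airyC, airyPoch]
  have hh0 : h 0 = 1 := by
    show (1 - (0:ℝ)) ^ a * g 0 = 1
    rw [hg0]
    simp [Real.one_rpow]
  have h0x : (0:ℝ) < 1 - x := by
    have := abs_lt.mp hx; linarith [this.2]
  have hgx : g x = (1 - x) ^ (-a) := by
    have hhx : (1 - x) ^ a * g x = 1 := by simpa [hh_def] using stepD.trans hh0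
    have hpow : (0:ℝ) < (1 - x) ^ a := Real.rpow_pos_of_pos h0x a
    rw [Real.rpow_neg (le_of_lt h0x)]
    field_simp
    linear_combination hhx
  have hsum := (airy_summable_c ha hx).hasSum
  have hfin : (∑' (k:ℕ), airyC a k * x ^ k) = (1 - x) ^ (-a) := hgx
  rwa [hfin] at hsum

lemma airy_hasSum_gamma {a : ℝ} (ha : 0 < a) {x : ℝ} (hx : |x| < 1) :
    HasSum (fun k : ℕ => Real.Gamma (a + k) / (k.factorial * Real.Gamma a) * x ^ k)
      ((1 - x) ^ (-a) : ℝ) := by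
  have heq : (fun k : ℕ => Real.Gamma (a + k) / (k.factorial * Real.Gamma a) * x ^ k)
      = fun k => airyC a k * x ^ k := by
    funext k
    rw [airyGamma_poch ha]
    have h1 : Real.Gamma a ≠ 0 := ne_of_gt (Real.Gamma_pos_of_pos ha)
    have h2 : (k.factorial : ℝ) ≠ 0 := by positivity
    unfold airyC
    field_simp
  rw [heq]
  exact airy_hasSum_binomial ha hx

lemma airy_outer (m : ℕ) {w c : ℝ} (hw1 : 0 < 1 - w)
    (hr : |c * w ^ 2 / (1 - w)| < 1) :
    HasSum (fun j : ℕ => (Nat.choose (m + j) m : ℝ) * c ^ j * w ^ (2 * j)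
        * (1 - w) ^ (-((j:ℝ) + m + 3/2)))
      ((1 - w) ^ (-((m:ℝ) + 3/2)) / (1 - c * w ^ 2 / (1 - w)) ^ (m + 1)) := by
  have hr' : ‖c * w ^ 2 / (1 - w)‖ < 1 := by rw [Real.norm_eq_abs]; exact hr
  have h := (hasSum_choose_mul_geometric_of_norm_lt_one (𝕜 := ℝ) m hr').mul_left
    ((1 - w) ^ (-((m:ℝ) + 3/2)))
  have hterm : ∀ j : ℕ, (1 - w) ^ (-((m:ℝ) + 3/2)) * (((j + m).choose m : ℝ)
      * (c * w ^ 2 / (1 - w)) ^ j)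
      = (Nat.choose (m + j) m : ℝ) * c ^ j * w ^ (2 * j) * (1 - w) ^ (-((j:ℝ) + m + 3/2)) := by
    intro j
    have h1 : ((1 - w) ^ (-1 : ℝ)) ^ j = (1 - w) ^ ((j:ℝ) * (-1)) := by
      rw [← Real.rpow_natCast ((1 - w) ^ (-1:ℝ)) j, ← Real.rpow_mul (le_of_lt hw1)]
      ring_nf
    have h2 : (1 - w) ^ (-((j:ℝ) + m + 3/2))
        = (1 - w) ^ (-((m:ℝ) + 3/2)) * ((1 - w)⁻¹) ^ j := by
      rw [← Real.rpow_neg_one (1 - w), h1, ← Real.rpow_add hw1]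
      congr 1
      ring
    rw [h2, Nat.add_comm j m]
    ring
  have hval : (1 - w) ^ (-((m:ℝ) + 3/2)) * (1 / (1 - c * w ^ 2 / (1 - w)) ^ (m + 1))
      = (1 - w) ^ (-((m:ℝ) + 3/2)) / (1 - c * w ^ 2 / (1 - w)) ^ (m + 1) := by
    rw [mul_one_div]
  rw [← hval]
  exact h.congr_fun fun j => (hterm j).symm

noncomputable def airyG (m : ℕ) (s : ℝ) : ℕ × ℕ → ℝ := fun p =>
  (1 / (2 * 3 ^ (m + 1)) : ℝ) * ((m + p.1).choose m : ℝ)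
    * (Real.Gamma (((p.1:ℝ) + m + 3/2) + p.2)
       / ((p.2.factorial : ℝ) * Real.Gamma ((p.1:ℝ) + m + 3/2)))
    * (-1/3 : ℝ) ^ p.1 * s ^ (2 * p.1 + p.2)

noncomputable def airyGV (m : ℕ) (s : ℝ) (j : ℕ) : ℝ :=
  (1 / (2 * 3 ^ (m + 1)) : ℝ) * (((m + j).choose m : ℝ) * (-1/3 : ℝ) ^ j * s ^ (2 * j)
    * (1 - s) ^ (-((j:ℝ) + m + 3/2)))

noncomputable def airyGVA (m : ℕ) (s : ℝ) (j : ℕ) : ℝ :=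
  (1 / (2 * 3 ^ (m + 1)) : ℝ) * (((m + j).choose m : ℝ) * (1/3 : ℝ) ^ j * |s| ^ (2 * j)
    * (1 - |s|) ^ (-((j:ℝ) + m + 3/2)))

lemma airyG_abs (m : ℕ) (s : ℝ) (p : ℕ × ℕ) :
    |airyG m s p| = (1 / (2 * 3 ^ (m + 1)) : ℝ) * ((m + p.1).choose m : ℝ)
      * (Real.Gamma (((p.1:ℝ) + m + 3/2) + p.2)
         / ((p.2.factorial : ℝ) * Real.Gamma ((p.1:ℝ) + m + 3/2)))
      * (1/3 : ℝ) ^ p.1 * |s| ^ (2 * p.1 + p.2) := by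
  have ha : (0:ℝ) < (p.1:ℝ) + m + 3/2 := by positivity
  have hΓ1 : 0 < Real.Gamma (((p.1:ℝ) + m + 3/2) + p.2) := by
    apply Real.Gamma_pos_of_pos; positivity
  have hΓ2 : 0 < Real.Gamma ((p.1:ℝ) + m + 3/2) := Real.Gamma_pos_of_pos ha
  have hf : (0:ℝ) < (p.2.factorial : ℝ) := by positivity
  unfold airyG
  rw [abs_mul, abs_mul, abs_mul, abs_mul, abs_pow, abs_pow,
    abs_of_pos (show (0:ℝ) < 1/(2*3^(m+1)) by positivity),
    abs_of_nonneg (show (0:ℝ) ≤ ((m+p.1).choose m : ℝ) by positivity),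
    abs_of_pos (div_pos hΓ1 (mul_pos hf hΓ2)),
    show |(-1/3 : ℝ)| = 1/3 by norm_num]

lemma airyG_fiber (m j : ℕ) {s : ℝ} (hs1 : |s| < 1) :
    HasSum (fun k => airyG m s (j, k)) (airyGV m s j) := by
  have ha : (0:ℝ) < (j:ℝ) + m + 3/2 := by positivity
  have h := (airy_hasSum_gamma ha hs1).mul_left
    ((1 / (2 * 3 ^ (m + 1)) : ℝ) * (((m + j).choose m : ℝ) * (-1/3 : ℝ) ^ j * s ^ (2 * j)))
  have hval : (1 / (2 * 3 ^ (m + 1)) : ℝ) * (((m + j).choose m : ℝ) * (-1/3 : ℝ) ^ j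
      * s ^ (2 * j)) * ((1 - s) ^ (-((j:ℝ) + m + 3/2))) = airyGV m s j := by
    unfold airyGV; ring
  rw [hval] at h
  refine h.congr_fun fun k => ?_
  unfold airyG
  rw [pow_add]
  ring

lemma airyG_fiber_abs (m j : ℕ) {s : ℝ} (hs1 : |s| < 1) :
    HasSum (fun k => |airyG m s (j, k)|) (airyGVA m s j) := by
  have ha : (0:ℝ) < (j:ℝ) + m + 3/2 := by positivity
  have hs1' : |(|s|)| < 1 := by rwa [abs_abs]
  have h := (airy_hasSum_gamma ha hs1').mul_left
    ((1 / (2 * 3 ^ (m + 1)) : ℝ) * (((m + j).choose m : ℝ) * (1/3 : ℝ) ^ j * |s| ^ (2 * j)))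
  have hval : (1 / (2 * 3 ^ (m + 1)) : ℝ) * (((m + j).choose m : ℝ) * (1/3 : ℝ) ^ j
      * |s| ^ (2 * j)) * ((1 - |s|) ^ (-((j:ℝ) + m + 3/2))) = airyGVA m s j := by
    unfold airyGVA; ring
  rw [hval] at h
  refine h.congr_fun fun k => ?_
  rw [airyG_abs, pow_add]
  ring

lemma airyG_apply (m : ℕ) (s : ℝ) (j k : ℕ) :
    airyG m s (j, k) = (1 / (2 * 3 ^ (m + 1)) : ℝ) * ((m + j).choose m : ℝ)
      * (Real.Gamma (((j:ℝ) + m + 3/2) + k)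
        / ((k.factorial : ℝ) * Real.Gamma ((j:ℝ) + m + 3/2)))
      * (-1/3 : ℝ) ^ j * s ^ (2 * j + k) := rfl

def airyEquiv : (Σ n : ℕ, Fin (n / 2 + 1)) ≃ ℕ × ℕ where
  toFun x := (x.2.1, x.1 - 2 * x.2.1)
  invFun p := ⟨2 * p.1 + p.2, ⟨p.1, by omega⟩⟩
  left_inv := by
    rintro ⟨n, j⟩
    have hj : (j : ℕ) < n / 2 + 1 := j.isLt
    have hn : 2 * (j : ℕ) + (n - 2 * (j : ℕ)) = n := by omega
    show (⟨2 * (j:ℕ) + (n - 2 * (j:ℕ)), ⟨(j:ℕ), by omega⟩⟩ : Σ n : ℕ, Fin (n/2+1)) = ⟨n, j⟩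
    refine Sigma.ext hn ?_
    rw [Fin.heq_ext_iff (show (2 * (j:ℕ) + (n - 2 * (j:ℕ))) / 2 + 1 = n / 2 + 1 by rw [hn])]
  right_inv := by
    rintro ⟨j, k⟩
    have : 2 * j + k - 2 * j = k := by omega
    simp [this]

lemma airy_hasSum_small (m : ℕ) {s : ℝ} (hs : |s| < 1/2) :
    HasSum (fun n => airyCoeffH m n * s ^ n)
      (1 / (2 * Real.sqrt (1 - s) * (3 - 3 * s + s ^ 2) ^ (m + 1))) := by
  have hs1 : |s| < 1 := lt_trans hs (by norm_num)
  have habs := abs_lt.mp hs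
  have hsnn := abs_nonneg s
  have hsle := le_abs_self s
  have hw1 : (0:ℝ) < 1 - s := by linarith
  have hw1' : (0:ℝ) < 1 - |s| := by linarith
  have hr : |(-1/3 : ℝ) * s ^ 2 / (1 - s)| < 1 := by
    rw [abs_div, abs_mul, abs_pow, abs_of_pos hw1,
      show |(-1/3:ℝ)| = 1/3 by norm_num, div_lt_one hw1]
    nlinarith
  have hr' : |(1/3 : ℝ) * |s| ^ 2 / (1 - |s|)| < 1 := by
    rw [abs_div, abs_mul, abs_pow, abs_abs, abs_of_pos hw1',
      show |(1/3:ℝ)| = 1/3 by norm_num, div_lt_one hw1']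
    nlinarith
  -- absolute summability over pairs
  have hGA : Summable (fun p => |airyG m s p|) := by
    refine (summable_prod_of_nonneg (fun p => abs_nonneg _)).mpr
      ⟨fun j => (airyG_fiber_abs m j hs1).summable, ?_⟩
    have houter := (airy_outer m hw1' hr').mul_left ((1 / (2 * 3 ^ (m + 1)) : ℝ))
    apply houter.summable.congr
    intro j
    show airyGVA m s j = _
    exact ((airyG_fiber_abs m j hs1).tsum_eq).symm
  have hG : Summable (airyG m s) := summable_abs_iff.mp hGA
  -- value of the double sum
  have houterS : HasSum (airyGV m s)
      ((1 / (2 * 3 ^ (m + 1)) : ℝ) * ((1 - s) ^ (-((m:ℝ) + 3/2))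
        / (1 - (-1/3 : ℝ) * s ^ 2 / (1 - s)) ^ (m + 1))) :=
    (airy_outer m hw1 hr).mul_left _
  have hfib : HasSum (airyGV m s) (∑' p, airyG m s p) :=
    hG.hasSum.prod_fiberwise (fun j => airyG_fiber m j hs1)
  have hT := hfib.unique houterS
  have hGsum : HasSum (airyG m s)
      ((1 / (2 * 3 ^ (m + 1)) : ℝ) * ((1 - s) ^ (-((m:ℝ) + 3/2))
        / (1 - (-1/3 : ℝ) * s ^ 2 / (1 - s)) ^ (m + 1))) := hT ▸ hG.hasSum
  -- reindex via sigma
  have hsig := airyEquiv.hasSum_iff.mpr hGsum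
  have hfin : ∀ n : ℕ, HasSum (fun j : Fin (n / 2 + 1) => (airyG m s ∘ airyEquiv) ⟨n, j⟩)
      (airyCoeffH m n * s ^ n) := by
    intro n
    have key : ∑ j ∈ Finset.range (n / 2 + 1), airyG m s (j, n - 2 * j)
        = airyCoeffH m n * s ^ n := by
      unfold airyCoeffH
      rw [Finset.mul_sum, Finset.sum_mul]
      apply Finset.sum_congr rfl
      intro j hj
      rw [Finset.mem_range] at hj
      have hj2 : 2 * j ≤ n := by omega
      have hn : 2 * j + (n - 2 * j) = n := by omega
      have harg : ((j:ℝ) + m + 3/2) + ((n - 2*j : ℕ) : ℝ) = (m:ℝ) + n - j + 3/2 := by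
        rw [Nat.cast_sub hj2]; push_cast; ring
      rw [airyG_apply, hn, harg]
      ring
    have h2 : HasSum (fun j : Fin (n / 2 + 1) => airyG m s (j.1, n - 2 * j.1))
        (airyCoeffH m n * s ^ n) := by
      have h3 := hasSum_fintype (fun j : Fin (n / 2 + 1) => airyG m s (j.1, n - 2 * j.1))
      rwa [Fin.sum_univ_eq_sum_range (fun j => airyG m s (j, n - 2 * j)) (n / 2 + 1), key] at h3
    exact h2
  have hmain := hsig.sigma hfin
  -- final algebraic simplification of the value
  have hQ : (0:ℝ) < 3 - 3 * s + s ^ 2 := by nlinarith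
  have hsq : (0:ℝ) < Real.sqrt (1 - s) := Real.sqrt_pos.mpr hw1
  have h1 : (1 - (-1/3 : ℝ) * s ^ 2 / (1 - s)) = (3 - 3 * s + s ^ 2) / (3 * (1 - s)) := by
    field_simp
    ring
  have h1s : ((1 - s) ^ (m + 1) : ℝ) ≠ 0 := pow_ne_zero _ (ne_of_gt hw1)
  have h2 : (1 - s) ^ (-((m:ℝ) + 3/2)) * ((1 - s) ^ (m + 1) : ℝ) = (Real.sqrt (1 - s))⁻¹ := by
    rw [← Real.rpow_natCast (1 - s) (m + 1), ← Real.rpow_add hw1,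
      show (-((m:ℝ) + 3/2) + ((m + 1 : ℕ) : ℝ)) = -(1/2) by push_cast; ring,
      Real.rpow_neg hw1.le, ← Real.sqrt_eq_rpow]
  have hu : (1 - s) ^ (-((m:ℝ) + 3/2)) = (Real.sqrt (1 - s))⁻¹ / ((1 - s) ^ (m + 1) : ℝ) := by
    rw [eq_div_iff h1s]; exact h2
  have hfinal : (1 / (2 * 3 ^ (m + 1)) : ℝ) * ((1 - s) ^ (-((m:ℝ) + 3/2))
      / (1 - (-1/3 : ℝ) * s ^ 2 / (1 - s)) ^ (m + 1))
      = 1 / (2 * Real.sqrt (1 - s) * (3 - 3 * s + s ^ 2) ^ (m + 1)) := by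
    rw [h1, hu, div_pow, mul_pow]
    have hQne : ((3 - 3 * s + s ^ 2) ^ (m + 1) : ℝ) ≠ 0 := pow_ne_zero _ (ne_of_gt hQ)
    have h3ne : ((3:ℝ) ^ (m + 1)) ≠ 0 := by positivity
    have hsqne : Real.sqrt (1 - s) ≠ 0 := ne_of_gt hsq
    field_simp
  rwa [hfinal] at hmain

noncomputable def airyF (m : ℕ) : ℂ → ℂ := fun z =>
  1 / (2 * (1 - z) ^ (1/2 : ℂ) * (3 - 3 * z + z ^ 2) ^ (m + 1))

lemma airy_quad_ne {z : ℂ} (hz : ‖z‖ < 1) : 3 - 3 * z + z ^ 2 ≠ 0 := by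
  intro h
  have h2 : (2 * z - 3) ^ 2 = -3 := by linear_combination 4 * h
  have hre := congrArg Complex.re h2
  have him := congrArg Complex.im h2
  simp only [pow_two, Complex.mul_re, Complex.mul_im, Complex.sub_re, Complex.sub_im,
    Complex.re_ofNat, Complex.im_ofNat, Complex.neg_re, Complex.neg_im] at hre him
  have hxb : |z.re| < 1 := lt_of_le_of_lt (Complex.abs_re_le_norm z)
    (by exact hz)
  have hxb' := abs_lt.mp hxb
  have hab : (2 * z.re - 3) * z.im = 0 := by linear_combination him / 4
  have hane : 2 * z.re - 3 ≠ 0 := by intro h; linarith [hxb'.2]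
  have hy : z.im = 0 := by
    rcases mul_eq_zero.mp hab with h | h
    · exact absurd h hane
    · exact h
  rw [hy] at hre
  nlinarith [hre, sq_nonneg (2 * z.re - 3)]

lemma airy_one_sub_ne {z : ℂ} (hz : ‖z‖ < 1) : (1:ℂ) - z ≠ 0 := by
  intro h
  have : (1:ℂ) = z := by linear_combination h
  rw [← this] at hz
  norm_num at hz

lemma airy_slit {z : ℂ} (hz : ‖z‖ < 1) : (1 - z) ∈ Complex.slitPlane := by
  rw [Complex.mem_slitPlane_iff]
  left
  have : |z.re| < 1 := lt_of_le_of_lt (Complex.abs_re_le_norm z)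
    (by exact hz)
  have := (abs_lt.mp this).2
  simp only [Complex.sub_re, Complex.one_re]
  linarith

lemma airy_F_diff (m : ℕ) : DifferentiableOn ℂ (airyF m) (Metric.ball 0 1) := by
  intro z hz
  rw [Metric.mem_ball, dist_zero_right] at hz
  have h1 : DifferentiableAt ℂ (fun z : ℂ => (1 - z) ^ (1/2 : ℂ)) z :=
    ((differentiableAt_const 1).sub differentiableAt_id).cpow
      (differentiableAt_const _) (airy_slit hz)
  have h2 : DifferentiableAt ℂ (fun z : ℂ => (3 - 3 * z + z ^ 2) ^ (m + 1)) z := by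
    apply DifferentiableAt.pow
    exact ((differentiableAt_const 3).sub ((differentiableAt_const 3).mul
      differentiableAt_id)).add (differentiableAt_id.pow 2)
  have hne1 : (1 - z) ^ (1/2 : ℂ) ≠ 0 := by
    intro h
    rcases (Complex.cpow_eq_zero_iff _ _).mp h with ⟨h', _⟩
    exact airy_one_sub_ne hz h'
  have hne2 : (3 - 3 * z + z ^ 2) ^ (m + 1) ≠ 0 := pow_ne_zero _ (airy_quad_ne hz)
  have hden : DifferentiableAt ℂ (fun z : ℂ => 2 * (1 - z) ^ (1/2 : ℂ)
      * (3 - 3 * z + z ^ 2) ^ (m + 1)) z := ((differentiableAt_const 2).mul h1).mul h2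
  have := (differentiableAt_const (1:ℂ)).div hden
    (by exact mul_ne_zero (mul_ne_zero two_ne_zero hne1) hne2)
  exact this.differentiableWithinAt

lemma airyF_real (m : ℕ) {x : ℝ} (hx : x < 1) :
    airyF m (x : ℂ)
      = ((1 / (2 * Real.sqrt (1 - x) * (3 - 3 * x + x ^ 2) ^ (m + 1)) : ℝ) : ℂ) := by
  have h0 : (0:ℝ) ≤ 1 - x := by linarith
  have h2 : ((Real.sqrt (1 - x) : ℝ) : ℂ) = (1 - (x:ℂ)) ^ (1/2 : ℂ) := by
    rw [Real.sqrt_eq_rpow, Complex.ofReal_cpow h0]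
    push_cast
    norm_num
  rw [show ((1 / (2 * Real.sqrt (1 - x) * (3 - 3 * x + x ^ 2) ^ (m + 1)) : ℝ) : ℂ)
      = 1 / (2 * ((Real.sqrt (1 - x) : ℝ) : ℂ)
        * (3 - 3 * (x:ℂ) + (x:ℂ) ^ 2) ^ (m + 1)) by push_cast; ring]
  rw [h2]
  rfl


theorem airyCoeffH_generating_function (m : ℕ) (s : ℝ) (hs : |s| < 1) :
    ∑' n : ℕ, airyCoeffH m n * s ^ n
      = 1 / (2 * Real.sqrt (1 - s) * (3 - 3 * s + s ^ 2) ^ (m + 1)) := by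
  classical
  set r : ℝ := max (1/2) ((|s| + 1)/2) with hr_def
  have hsnn := abs_nonneg s
  have hr0 : 0 < r := lt_of_lt_of_le (by norm_num) (le_max_left _ _)
  have hr1 : r < 1 := by
    rw [hr_def]
    apply max_lt (by norm_num)
    linarith
  have hrs : |s| < r := lt_of_lt_of_le (by linarith : |s| < (|s| + 1)/2) (le_max_right _ _)
  have hr13 : (1/3 : ℝ) < r := lt_of_lt_of_le (by norm_num) (le_max_left _ _)
  have hcoe : ((r.toNNReal : ℝ≥0) : ℝ) = r := Real.coe_toNNReal r hr0.le
  have hsub : Metric.closedBall (0:ℂ) r ⊆ Metric.ball (0:ℂ) 1 := by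
    intro z hz
    rw [Metric.mem_closedBall, dist_zero_right] at hz
    rw [Metric.mem_ball, dist_zero_right]
    linarith
  have hd : DifferentiableOn ℂ (airyF m) (Metric.closedBall (0:ℂ) ((r.toNNReal : ℝ≥0) : ℝ)) := by
    rw [hcoe]
    exact (airy_F_diff m).mono hsub
  have hF := hd.hasFPowerSeriesOnBall (Real.toNNReal_pos.mpr hr0)
  set q := FormalMultilinearSeries.ofScalars ℂ (fun n => (airyCoeffH m n : ℂ)) with hq_def
  -- radius bound for q
  have hrad : ((1/3 : ℝ≥0) : ℝ≥0∞) ≤ q.radius := by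
    apply FormalMultilinearSeries.le_radius_of_summable
    have h13 : Summable (fun n => |airyCoeffH m n| * ((1/3 : ℝ)) ^ n) := by
      have h1 := (airy_hasSum_small m
        (show |(1/3:ℝ)| < 1/2 by rw [abs_of_pos (by norm_num : (0:ℝ) < 1/3)]; norm_num)).summable
      have h2 := summable_abs_iff.mpr h1
      apply h2.congr
      intro n
      rw [abs_mul, abs_pow, abs_of_pos (by norm_num : (0:ℝ) < 1/3)]
    apply h13.congr
    intro n
    rw [hq_def, FormalMultilinearSeries.ofScalars_norm, Complex.norm_real, Real.norm_eq_abs]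
    norm_num
  have hq0 : (0 : ℝ≥0∞) < q.radius := lt_of_lt_of_le (by norm_num) hrad
  have hG := q.hasFPowerSeriesOnBall hq0
  -- q.sum agrees with airyF on small real points
  have hqF : ∀ x : ℝ, |x| < 1/3 → airyF m (x:ℂ) = q.sum (x:ℂ) := by
    intro x hx
    have hx2 : |x| < 1/2 := lt_trans hx (by norm_num)
    have hxn : ‖(x:ℂ)‖ < 1/3 := by rw [Complex.norm_real, Real.norm_eq_abs]; exact hx
    have hmemq : (x:ℂ) ∈ EMetric.ball (0:ℂ) q.radius := by
      show edist (x:ℂ) 0 < _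
      rw [edist_zero_right, enorm_eq_nnnorm]
      refine lt_of_lt_of_le ?_ hrad
      exact_mod_cast hxn
    have hqx := q.hasSum hmemq
    have hqx2 : HasSum (fun n => ((airyCoeffH m n * x ^ n : ℝ) : ℂ)) (q.sum (x:ℂ)) := by
      refine hqx.congr_fun fun n => ?_
      rw [hq_def, FormalMultilinearSeries.ofScalars_apply_eq, smul_eq_mul]
      push_cast
      ring
    have hreal := airy_hasSum_small m hx2
    have hcast : HasSum (fun n => ((airyCoeffH m n * x ^ n : ℝ) : ℂ))
        (((1 / (2 * Real.sqrt (1 - x) * (3 - 3 * x + x ^ 2) ^ (m + 1)) : ℝ) : ℂ)) :=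
      Complex.hasSum_ofReal.mpr hreal
    rw [airyF_real m (by have := (abs_lt.mp hx2).2; linarith)]
    exact hcast.unique hqx2
  -- identity theorem on the ball of radius 1/3
  have hFa : AnalyticOnNhd ℂ (airyF m) (Metric.ball (0:ℂ) (1/3)) := by
    intro z hz
    rw [Metric.mem_ball, dist_zero_right] at hz
    refine hF.analyticAt_of_mem ?_
    rw [Metric.mem_eball, edist_zero_right, enorm_eq_nnnorm, ENNReal.coe_lt_coe, ← NNReal.coe_lt_coe, hcoe]
    calc (‖z‖₊ : ℝ) = ‖z‖ := rfl
    _ < 1/3 := hz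
    _ < r := hr13
  have hGa : AnalyticOnNhd ℂ q.sum (Metric.ball (0:ℂ) (1/3)) := by
    intro z hz
    rw [Metric.mem_ball, dist_zero_right] at hz
    refine hG.analyticAt_of_mem ?_
    rw [EMetric.mem_ball, edist_zero_right]
    refine lt_of_lt_of_le ?_ hrad
    exact_mod_cast hz
  have hfreq : ∃ᶠ z in nhdsWithin (0:ℂ) {z | z ≠ 0}, airyF m z = q.sum z := by
    have htend : Filter.Tendsto (fun k : ℕ => (((1:ℝ)/(k+4) : ℝ) : ℂ)) Filter.atTop
        (nhdsWithin (0:ℂ) {z | z ≠ 0}) := by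
      apply tendsto_nhdsWithin_of_tendsto_nhds_of_eventually_within
      · have hr : Filter.Tendsto (fun k : ℕ => (1:ℝ)/(k+4)) Filter.atTop (nhds 0) := by
          have := (tendsto_one_div_add_atTop_nhds_zero_nat (𝕜 := ℝ)).comp
            (Filter.tendsto_add_atTop_nat 3)
          refine this.congr fun k => ?_
          simp only [Function.comp]
          push_cast
          ring_nf
        have h2 : Filter.Tendsto (fun k : ℕ => (((1:ℝ)/(k+4) : ℝ) : ℂ)) Filter.atTop
            (nhds ((0:ℝ):ℂ)) := (Complex.continuous_ofReal.tendsto 0).comp hr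
        simpa using h2
      · filter_upwards with k
        simp only [Set.mem_setOf_eq, ne_eq, Complex.ofReal_eq_zero]
        positivity
    refine htend.frequently (Filter.Frequently.of_forall fun k => ?_)
    have hk : |(1:ℝ)/(k+4)| < 1/3 := by
      rw [abs_of_pos (by positivity), div_lt_iff₀ (by positivity)]
      have : (0:ℝ) ≤ (k:ℝ) := Nat.cast_nonneg k
      nlinarith
    exact hqF _ hk
  have heqOn : Set.EqOn (airyF m) q.sum (Metric.ball (0:ℂ) (1/3)) :=
    hFa.eqOn_of_preconnected_of_frequently_eq hGa ((convex_ball _ _).isPreconnected)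
      (Metric.mem_ball_self (by norm_num)) hfreq
  have hnear : q.sum =ᶠ[nhds (0:ℂ)] airyF m := by
    filter_upwards [Metric.ball_mem_nhds (0:ℂ) (show (0:ℝ) < 1/3 by norm_num)] with z hz
    exact (heqOn hz).symm
  have hqAt : HasFPowerSeriesAt (airyF m) q 0 := hG.hasFPowerSeriesAt.congr hnear
  have hpq := hF.hasFPowerSeriesAt.eq_formalMultilinearSeries hqAt
  -- evaluate at s
  have hmem : (s:ℂ) ∈ EMetric.ball (0:ℂ) (r.toNNReal : ℝ≥0∞) := by
    show edist (s:ℂ) 0 < _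
    rw [edist_zero_right, enorm_eq_nnnorm, ENNReal.coe_lt_coe, ← NNReal.coe_lt_coe, hcoe]
    calc (‖(s:ℂ)‖₊ : ℝ) = ‖(s:ℂ)‖ := rfl
    _ = |s| := by rw [Complex.norm_real, Real.norm_eq_abs]
    _ < r := hrs
  have hS := hF.hasSum hmem
  rw [hpq] at hS
  rw [zero_add] at hS
  have hS2 : HasSum (fun n => ((airyCoeffH m n * s ^ n : ℝ) : ℂ)) (airyF m (s:ℂ)) := by
    refine hS.congr_fun fun n => ?_
    rw [hq_def, FormalMultilinearSeries.ofScalars_apply_eq, smul_eq_mul]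
    push_cast
    ring
  rw [airyF_real m (by have := (abs_lt.mp hs).2; linarith)] at hS2
  exact (Complex.hasSum_ofReal.mp hS2).tsum_eq
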